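/- In the Devil's exchange, every dollar bill eventually ends up permanently with the Devil: for every natural number n ≥ 1, bill number n is taken from the player at transaction n and is never returned at any later transaction; consequently the set of bills held by the player 'in the limit' (bills that the player holds from some transaction onward) is empty. -/
import Mathlib


/-- The player's holdings after `n` transactions in the Devil's exchange:
`P 0` is the set of odd naturals; at transaction `n+1` the Devil takes bill
`n+1` and gives bills `4(n+1)-2` and `4(n+1)`. -/
def devilHoldings : ℕ → Set ℕ
  | 0 => {m | Odd m}
  | n + 1 => (devilHoldings n \ {n + 1}) ∪ {4 * (n + 1) - 2, 4 * (n + 1)}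

lemma devil_zero : ∀ n, 0 ∉ devilHoldings n := by
  intro n
  induction n with
  | zero => simp [devilHoldings, Nat.odd_iff]
  | succ k ih =>
    simp only [devilHoldings, Set.mem_union, Set.mem_diff, Set.mem_insert_iff,
      Set.mem_singleton_iff]
    push_neg
    exact ⟨fun h => absurd h ih, by omega, by omega⟩

lemma devil_gone : ∀ n : ℕ, 1 ≤ n → ∀ m : ℕ, n ≤ m → n ∉ devilHoldings m := by
  intro n hn m
  induction m with
  | zero => omega
  | succ k ih =>
    intro hnk
    simp only [devilHoldings, Set.mem_union, Set.mem_diff, Set.mem_insert_iff,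
      Set.mem_singleton_iff]
    push_neg
    refine ⟨fun h => ?_, by omega, by omega⟩
    rcases Nat.lt_or_ge k n with h1 | h1
    · omega
    · exact absurd h (ih h1)

theorem devil_exchange_player_ends_with_nothing :
    (∀ n : ℕ, 1 ≤ n → ∀ m : ℕ, n ≤ m → n ∉ devilHoldings m) ∧
    {b : ℕ | ∃ N : ℕ, ∀ n : ℕ, N ≤ n → b ∈ devilHoldings n} = ∅ := by
  refine ⟨devil_gone, ?_⟩
  ext b
  simp only [Set.mem_setOf_eq, Set.mem_empty_iff_false, iff_false]
  rintro ⟨N, hN⟩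
  rcases Nat.eq_zero_or_pos b with rfl | hb
  · exact devil_zero N (hN N le_rfl)
  · exact devil_gone b hb (max N b) (le_max_right _ _) (hN _ (le_max_left _ _))
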